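/- A faithful index function cannot be computable: there is no computable injective function I from descriptions of Turing machines to binary strings such that C(t) ≤ |I(t)| ≤ C(t) + c for all machine descriptions t and some constant c. -/

import Mathlib

/-- Decode a natural number into a binary string (default `[]`). -/
def decodeBL (n : ℕ) : List Bool := (Encodable.decode (α := List Bool) n).getD []

theorem decodeBL_computable : Computable decodeBL :=
  (Primrec.option_getD.comp (Primrec.decode (α := List Bool)) (Primrec.const [])).to_comp

theorem decodeBL_encode (t : List Bool) : decodeBL (Encodable.encode t) = t := by
  simp [decodeBL]

/-- Plain Kolmogorov complexity relative to a partial machine `U`. -/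
noncomputable def plainC (U : List Bool →. List Bool) (x : List Bool) : ℕ :=
  sInf {n | ∃ q : List Bool, U q = Part.some x ∧ n = q.length}

/-- A faithful index function cannot be computable: for a universal machine `U`,
there is no computable injective `I` from machine descriptions to binary strings
with `C(t) ≤ |I(t)| ≤ C(t) + c` for all `t`. -/
theorem no_computable_faithful_index (U : List Bool →. List Bool)
    (hUpartrec : Partrec U)
    (hUuniv : ∀ f : List Bool →. List Bool, Partrec f →
      ∃ e : List Bool, ∀ p : List Bool, U (e ++ p) = f p) :
    ¬ ∃ (I : List Bool → List Bool) (c : ℕ),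
        Computable I ∧ Function.Injective I ∧
        ∀ t : List Bool, plainC U t ≤ (I t).length ∧ (I t).length ≤ plainC U t + c := by
  rintro ⟨I, c, hIcomp, hIinj, hI⟩
  -- lengths of `I t` are unbounded since `I` is injective
  have hex : ∀ m : ℕ, ∃ n : ℕ, m ≤ (I (decodeBL n)).length := by
    intro m
    by_contra h
    push_neg at h
    have hfin : {l : List Bool | l.length < m}.Finite := List.finite_length_lt Bool m
    have hsub : Set.range I ⊆ {l : List Bool | l.length < m} := by
      rintro _ ⟨t, rfl⟩
      have := h (Encodable.encode t)
      simpa [decodeBL_encode] using this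
    exact (Set.infinite_range_of_injective hIinj) (hfin.subset hsub)
  -- the search predicate
  set pr : List Bool → ℕ →. Bool :=
    fun a n => Part.some (decide (2 * a.length ≤ (I (decodeBL n)).length)) with hprdef
  have hpred : Computable₂ (fun (a : List Bool) (n : ℕ) =>
      decide (2 * a.length ≤ (I (decodeBL n)).length)) := by
    have h1 : Computable (fun x : List Bool × ℕ => (I (decodeBL x.2)).length) :=
      Primrec.list_length.to_comp.comp
        (hIcomp.comp (decodeBL_computable.comp Computable.snd))
    have h2 : Computable (fun x : List Bool × ℕ => 2 * x.1.length) :=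
      (Primrec.nat_mul.comp (Primrec.const 2)
        (Primrec.list_length.comp Primrec.fst)).to_comp
    exact (Primrec.nat_le.decide.to_comp.comp h2 h1).to₂
  have hpr : Partrec₂ pr := hpred.partrec₂
  -- the search function
  set F : List Bool →. List Bool :=
    fun a => (Nat.rfind (pr a)).map decodeBL with hFdef
  have hF : Partrec F :=
    (Partrec.rfind hpr).map ((decodeBL_computable.comp Computable.snd).to₂)
  obtain ⟨e, he⟩ := hUuniv F hF
  set m : ℕ := e.length + c + 1 with hm
  set p : List Bool := List.replicate m true with hp
  have hplen : p.length = m := List.length_replicate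
  -- the search terminates
  have hdom : (Nat.rfind (pr p)).Dom := by
    obtain ⟨n, hn⟩ := hex (2 * m)
    rw [Nat.rfind_dom]
    refine ⟨n, by simp [hprdef, hplen, hn], ?_⟩
    intro k _hk
    trivial
  set nmin : ℕ := (Nat.rfind (pr p)).get hdom with hnmin
  set t : List Bool := decodeBL nmin with ht
  have hFt : F p = Part.some t := by
    rw [Part.eq_some_iff]
    rw [hFdef]
    exact Part.mem_map decodeBL (Part.get_mem hdom)
  have hU : U (e ++ p) = Part.some t := by rw [he, hFt]
  have hC : plainC U t ≤ e.length + m := by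
    have hmem : (e ++ p).length ∈ {n | ∃ q : List Bool, U q = Part.some t ∧ n = q.length} :=
      ⟨e ++ p, hU, rfl⟩
    have := Nat.sInf_le hmem
    simpa [hplen, plainC] using this
  have hspec : 2 * m ≤ (I t).length := by
    have h0 : true ∈ pr p nmin := Nat.rfind_spec (Part.get_mem hdom)
    rw [hprdef] at h0
    have h1 := (Part.mem_some_iff.1 h0).symm
    rw [decide_eq_true_iff, hplen] at h1
    exact h1
  have hup : (I t).length ≤ plainC U t + c := (hI t).2
  omega
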